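/- Let z_1, …, z_N be nonzero complex numbers and define A = Σ_{|z_n|<1} ((|z_n|² − 1)/2 − log|z_n|). If A < 1, then every z_n with |z_n| < 1 satisfies |z_n| ≥ 1 − √A. -/

import Mathlib

lemma key9 (x : ℝ) (hx0 : 0 < x) (hx1 : x < 1) :
    (1 - x) ^ 2 ≤ (x ^ 2 - 1) / 2 - Real.log x := by
  set g : ℝ → ℝ := fun t => (t ^ 2 - 1) / 2 - Real.log t - (1 - t) ^ 2 with hg
  have hderiv : ∀ y ∈ Set.Ioo (0:ℝ) 1,
      HasDerivAt g ((2 * y ^ 1) / 2 - y⁻¹ - (↑2 * (1 - y) ^ 1 * (0 - 1))) y := by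
    intro y hy
    exact (((hasDerivAt_pow 2 y).sub_const 1).div_const 2).sub
      (Real.hasDerivAt_log hy.1.ne') |>.sub
      (((hasDerivAt_const y (1:ℝ)).sub (hasDerivAt_id y)).pow 2)
  have hcont : ContinuousOn g (Set.Ioc 0 1) := by
    apply ContinuousOn.sub
    apply ContinuousOn.sub
    · fun_prop
    · exact Real.continuousOn_log.mono (fun y hy => by
        simp only [Set.mem_compl_iff, Set.mem_singleton_iff]; exact hy.1.ne')
    · fun_prop
  have hanti : StrictAntiOn g (Set.Ioc 0 1) := by
    apply strictAntiOn_of_deriv_neg (convex_Ioc 0 1) hcont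
    intro y hy
    rw [interior_Ioc] at hy
    rw [(hderiv y hy).deriv]
    have h1 : y * y⁻¹ = 1 := mul_inv_cancel₀ hy.1.ne'
    nlinarith [sq_nonneg (1 - y), hy.1, hy.2]
  have := hanti (Set.mem_Ioc.mpr ⟨hx0, hx1.le⟩) (Set.mem_Ioc.mpr ⟨one_pos, le_refl 1⟩) hx1
  simp only [hg, Real.log_one] at this
  nlinarith [this]

theorem stmt9 (N : ℕ) (z : Fin N → ℂ) (hz : ∀ n, z n ≠ 0)
    (hA : (∑ n ∈ Finset.univ.filter (fun n => ‖z n‖ < 1),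
        ((‖z n‖ ^ 2 - 1) / 2 - Real.log ‖z n‖)) < 1) :
    ∀ n, ‖z n‖ < 1 →
      1 - Real.sqrt (∑ n ∈ Finset.univ.filter (fun n => ‖z n‖ < 1),
          ((‖z n‖ ^ 2 - 1) / 2 - Real.log ‖z n‖)) ≤
        ‖z n‖ := by
  intro n hn
  set A := ∑ n ∈ Finset.univ.filter (fun n => ‖z n‖ < 1),
      ((‖z n‖ ^ 2 - 1) / 2 - Real.log ‖z n‖) with hAdef
  have hpos : ∀ m, 0 < ‖z m‖ := fun m => norm_pos_iff.mpr (hz m)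
  have hterm : ∀ m ∈ Finset.univ.filter (fun m => ‖z m‖ < 1),
      0 ≤ (‖z m‖ ^ 2 - 1) / 2 - Real.log ‖z m‖ := by
    intro m hm
    have hm' : ‖z m‖ < 1 := (Finset.mem_filter.mp hm).2
    exact le_trans (sq_nonneg _) (key9 _ (hpos m) hm')
  have hle : (1 - ‖z n‖) ^ 2 ≤ A := by
    refine le_trans (key9 _ (hpos n) hn) ?_
    exact Finset.single_le_sum hterm (Finset.mem_filter.mpr ⟨Finset.mem_univ n, hn⟩)
  have h1 : 1 - ‖z n‖ ≤ Real.sqrt A := by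
    calc 1 - ‖z n‖ = Real.sqrt ((1 - ‖z n‖) ^ 2) :=
          (Real.sqrt_sq (by linarith)).symm
      _ ≤ Real.sqrt A := Real.sqrt_le_sqrt hle
  linarith
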